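/- The truncated tetrahedron graph is not 5-gonal: there exist five vertices a, b, c, x, y such that d(x,y) + d(a,b) + d(a,c) + d(b,c) > d(x,a) + d(x,b) + d(x,c) + d(y,a) + d(y,b) + d(y,c), where d is the graph distance. Consequently, the truncated tetrahedron graph admits no embedding with any scale λ ≥ 1 into any ℤ^n. -/
import Mathlib
set_option maxHeartbeats 1000000


/-- The vertices of the truncated tetrahedron: the 12 points of `ℤ^3` that are
coordinate permutations of `(±1, ±1, ±3)` whose product of coordinates is positive. -/
def TrTetraVertex (v : Fin 3 → ℤ) : Prop :=
  (∃ σ : Equiv.Perm (Fin 3), |v (σ 0)| = 1 ∧ |v (σ 1)| = 1 ∧ |v (σ 2)| = 3) ∧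
    0 < v 0 * v 1 * v 2

/-- The truncated tetrahedron graph: vertices as above, adjacent iff the squared
Euclidean distance equals 8. -/
def truncatedTetrahedronGraph : SimpleGraph {v : Fin 3 → ℤ // TrTetraVertex v} :=
  SimpleGraph.fromRel (fun v w => ∑ i, (v.val i - w.val i) ^ 2 = 8)


abbrev TTV := {v : Fin 3 → ℤ // TrTetraVertex v}

lemma ttv_adj_iff (u v : TTV) :
    truncatedTetrahedronGraph.Adj u v ↔ u.val ≠ v.val ∧
      (u.val 0 - v.val 0) ^ 2 + (u.val 1 - v.val 1) ^ 2 + (u.val 2 - v.val 2) ^ 2 = 8 := by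
  simp only [truncatedTetrahedronGraph, SimpleGraph.fromRel_adj, ne_eq, Subtype.ext_iff,
    Fin.sum_univ_three]
  constructor
  · rintro ⟨h, h' | h'⟩
    · exact ⟨h, h'⟩
    · exact ⟨h, by linear_combination h'⟩
  · rintro ⟨h, h'⟩; exact ⟨h, Or.inl h'⟩

def mkTTV (a b c : ℤ) (σ : Equiv.Perm (Fin 3))
    (h1 : |(![a,b,c]) (σ 0)| = 1 ∧ |(![a,b,c]) (σ 1)| = 1 ∧ |(![a,b,c]) (σ 2)| = 3)
    (h2 : 0 < a * b * c) : TTV :=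
  ⟨![a,b,c], ⟨σ, h1⟩, by simpa using h2⟩

def vA : TTV := mkTTV (-3) (-1) 1 (Equiv.swap 0 2) (by decide) (by norm_num)
def vB : TTV := mkTTV 1 (-1) (-3) (Equiv.refl _) (by decide) (by norm_num)
def vC : TTV := mkTTV 1 3 1 (Equiv.swap 1 2) (by decide) (by norm_num)
def vX : TTV := mkTTV (-3) 1 (-1) (Equiv.swap 0 2) (by decide) (by norm_num)
def vY : TTV := mkTTV 1 (-3) (-1) (Equiv.swap 1 2) (by decide) (by norm_num)
def m1 : TTV := mkTTV (-1) 1 (-3) (Equiv.refl _) (by decide) (by norm_num)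
def m2 : TTV := mkTTV (-1) 3 (-1) (Equiv.swap 1 2) (by decide) (by norm_num)
def m3 : TTV := mkTTV (-1) (-3) 1 (Equiv.swap 1 2) (by decide) (by norm_num)
def m4 : TTV := mkTTV 3 (-1) (-1) (Equiv.swap 0 2) (by decide) (by norm_num)
def m5 : TTV := mkTTV 3 1 1 (Equiv.swap 0 2) (by decide) (by norm_num)

-- edges
lemma eXA : truncatedTetrahedronGraph.Adj vX vA := by rw [ttv_adj_iff]; exact ⟨by decide, by decide⟩
lemma eYB : truncatedTetrahedronGraph.Adj vY vB := by rw [ttv_adj_iff]; exact ⟨by decide, by decide⟩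
lemma eXm1 : truncatedTetrahedronGraph.Adj vX m1 := by rw [ttv_adj_iff]; exact ⟨by decide, by decide⟩
lemma em1B : truncatedTetrahedronGraph.Adj m1 vB := by rw [ttv_adj_iff]; exact ⟨by decide, by decide⟩
lemma eXm2 : truncatedTetrahedronGraph.Adj vX m2 := by rw [ttv_adj_iff]; exact ⟨by decide, by decide⟩
lemma em2C : truncatedTetrahedronGraph.Adj m2 vC := by rw [ttv_adj_iff]; exact ⟨by decide, by decide⟩
lemma eYm3 : truncatedTetrahedronGraph.Adj vY m3 := by rw [ttv_adj_iff]; exact ⟨by decide, by decide⟩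
lemma em3A : truncatedTetrahedronGraph.Adj m3 vA := by rw [ttv_adj_iff]; exact ⟨by decide, by decide⟩
lemma eYm4 : truncatedTetrahedronGraph.Adj vY m4 := by rw [ttv_adj_iff]; exact ⟨by decide, by decide⟩
lemma em4m5 : truncatedTetrahedronGraph.Adj m4 m5 := by rw [ttv_adj_iff]; exact ⟨by decide, by decide⟩
lemma em5C : truncatedTetrahedronGraph.Adj m5 vC := by rw [ttv_adj_iff]; exact ⟨by decide, by decide⟩

lemma classify (v : Fin 3 → ℤ) (h : TrTetraVertex v) :
    (v 0 = -3 ∧ v 1 = -1 ∧ v 2 = 1) ∨ (v 0 = -3 ∧ v 1 = 1 ∧ v 2 = -1) ∨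
    (v 0 = -1 ∧ v 1 = -3 ∧ v 2 = 1) ∨ (v 0 = -1 ∧ v 1 = -1 ∧ v 2 = 3) ∨
    (v 0 = -1 ∧ v 1 = 1 ∧ v 2 = -3) ∨ (v 0 = -1 ∧ v 1 = 3 ∧ v 2 = -1) ∨
    (v 0 = 1 ∧ v 1 = -3 ∧ v 2 = -1) ∨ (v 0 = 1 ∧ v 1 = -1 ∧ v 2 = -3) ∨
    (v 0 = 1 ∧ v 1 = 1 ∧ v 2 = 3) ∨ (v 0 = 1 ∧ v 1 = 3 ∧ v 2 = 1) ∨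
    (v 0 = 3 ∧ v 1 = -1 ∧ v 2 = -1) ∨ (v 0 = 3 ∧ v 1 = 1 ∧ v 2 = 1) := by
  obtain ⟨⟨σ, h0, h1, h2⟩, hp⟩ := h
  have tri : ∀ i : Fin 3, i = 0 ∨ i = 1 ∨ i = 2 := by decide
  rcases tri (σ 0) with e0|e0|e0 <;> rcases tri (σ 1) with e1|e1|e1 <;>
      rcases tri (σ 2) with e2|e2|e2 <;>
    rw [e0] at h0 <;> rw [e1] at h1 <;> rw [e2] at h2 <;>
    first
    | exact absurd (σ.injective (e0.trans e1.symm)) (by decide)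
    | exact absurd (σ.injective (e0.trans e2.symm)) (by decide)
    | exact absurd (σ.injective (e1.trans e2.symm)) (by decide)
    | (rcases (abs_eq (by norm_num : (0:ℤ) ≤ 1)).mp h0 with v0|v0 <;>
       rcases (abs_eq (by norm_num : (0:ℤ) ≤ 1)).mp h1 with v1|v1 <;>
       rcases (abs_eq (by norm_num : (0:ℤ) ≤ 3)).mp h2 with v2|v2 <;>
       first
       | (rw [v0, v1, v2]; decide)
       | (exfalso; rw [v0, v1, v2] at hp; norm_num at hp))

lemma three_le_dist (u v : TTV) (hr : truncatedTetrahedronGraph.Reachable u v) (hne : u ≠ v)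
    (hnadj : ¬ truncatedTetrahedronGraph.Adj u v)
    (hcom : ∀ w, ¬(truncatedTetrahedronGraph.Adj u w ∧ truncatedTetrahedronGraph.Adj w v)) :
    3 ≤ truncatedTetrahedronGraph.dist u v := by
  have h0 : 0 < truncatedTetrahedronGraph.dist u v := hr.pos_dist_of_ne hne
  have h1 : truncatedTetrahedronGraph.dist u v ≠ 1 := fun h =>
    hnadj (SimpleGraph.dist_eq_one_iff_adj.mp h)
  have h2 : truncatedTetrahedronGraph.dist u v ≠ 2 := by
    intro h
    obtain ⟨p, hp⟩ := hr.exists_walk_length_eq_dist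
    rw [h] at hp
    cases p with
    | nil => simp at hp
    | cons ha q =>
      cases q with
      | nil => simp at hp
      | cons hb q' =>
        cases q' with
        | nil => exact hcom _ ⟨ha, hb⟩
        | cons hc q'' => simp [SimpleGraph.Walk.length_cons] at hp
  omega

lemma no_common (u v : TTV)
    (h : ∀ w0 w1 w2 : ℤ,
      ((w0 = -3 ∧ w1 = -1 ∧ w2 = 1) ∨ (w0 = -3 ∧ w1 = 1 ∧ w2 = -1) ∨
       (w0 = -1 ∧ w1 = -3 ∧ w2 = 1) ∨ (w0 = -1 ∧ w1 = -1 ∧ w2 = 3) ∨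
       (w0 = -1 ∧ w1 = 1 ∧ w2 = -3) ∨ (w0 = -1 ∧ w1 = 3 ∧ w2 = -1) ∨
       (w0 = 1 ∧ w1 = -3 ∧ w2 = -1) ∨ (w0 = 1 ∧ w1 = -1 ∧ w2 = -3) ∨
       (w0 = 1 ∧ w1 = 1 ∧ w2 = 3) ∨ (w0 = 1 ∧ w1 = 3 ∧ w2 = 1) ∨
       (w0 = 3 ∧ w1 = -1 ∧ w2 = -1) ∨ (w0 = 3 ∧ w1 = 1 ∧ w2 = 1)) →
      ¬((u.val 0 - w0) ^ 2 + (u.val 1 - w1) ^ 2 + (u.val 2 - w2) ^ 2 = 8 ∧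
        (w0 - v.val 0) ^ 2 + (w1 - v.val 1) ^ 2 + (w2 - v.val 2) ^ 2 = 8)) :
    ∀ w, ¬(truncatedTetrahedronGraph.Adj u w ∧ truncatedTetrahedronGraph.Adj w v) := by
  rintro w ⟨h1, h2⟩
  rw [ttv_adj_iff] at h1 h2
  exact h (w.val 0) (w.val 1) (w.val 2) (classify w.val w.2) ⟨h1.2, h2.2⟩



lemma hcomXY : ∀ w, ¬(truncatedTetrahedronGraph.Adj vX w ∧ truncatedTetrahedronGraph.Adj w vY) := by
  apply no_common
  rintro w0 w1 w2 (⟨rfl,rfl,rfl⟩|(⟨rfl,rfl,rfl⟩|(⟨rfl,rfl,rfl⟩|(⟨rfl,rfl,rfl⟩|(⟨rfl,rfl,rfl⟩|(⟨rfl,rfl,rfl⟩|(⟨rfl,rfl,rfl⟩|(⟨rfl,rfl,rfl⟩|(⟨rfl,rfl,rfl⟩|(⟨rfl,rfl,rfl⟩|(⟨rfl,rfl,rfl⟩|⟨rfl,rfl,rfl⟩))))))))))) <;> rintro ⟨s1, s2⟩ <;>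
    first | (revert s1; decide) | (revert s2; decide)

lemma hcomAB : ∀ w, ¬(truncatedTetrahedronGraph.Adj vA w ∧ truncatedTetrahedronGraph.Adj w vB) := by
  apply no_common
  rintro w0 w1 w2 (⟨rfl,rfl,rfl⟩|(⟨rfl,rfl,rfl⟩|(⟨rfl,rfl,rfl⟩|(⟨rfl,rfl,rfl⟩|(⟨rfl,rfl,rfl⟩|(⟨rfl,rfl,rfl⟩|(⟨rfl,rfl,rfl⟩|(⟨rfl,rfl,rfl⟩|(⟨rfl,rfl,rfl⟩|(⟨rfl,rfl,rfl⟩|(⟨rfl,rfl,rfl⟩|⟨rfl,rfl,rfl⟩))))))))))) <;> rintro ⟨s1, s2⟩ <;>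
    first | (revert s1; decide) | (revert s2; decide)

lemma hcomAC : ∀ w, ¬(truncatedTetrahedronGraph.Adj vA w ∧ truncatedTetrahedronGraph.Adj w vC) := by
  apply no_common
  rintro w0 w1 w2 (⟨rfl,rfl,rfl⟩|(⟨rfl,rfl,rfl⟩|(⟨rfl,rfl,rfl⟩|(⟨rfl,rfl,rfl⟩|(⟨rfl,rfl,rfl⟩|(⟨rfl,rfl,rfl⟩|(⟨rfl,rfl,rfl⟩|(⟨rfl,rfl,rfl⟩|(⟨rfl,rfl,rfl⟩|(⟨rfl,rfl,rfl⟩|(⟨rfl,rfl,rfl⟩|⟨rfl,rfl,rfl⟩))))))))))) <;> rintro ⟨s1, s2⟩ <;>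
    first | (revert s1; decide) | (revert s2; decide)

lemma hcomBC : ∀ w, ¬(truncatedTetrahedronGraph.Adj vB w ∧ truncatedTetrahedronGraph.Adj w vC) := by
  apply no_common
  rintro w0 w1 w2 (⟨rfl,rfl,rfl⟩|(⟨rfl,rfl,rfl⟩|(⟨rfl,rfl,rfl⟩|(⟨rfl,rfl,rfl⟩|(⟨rfl,rfl,rfl⟩|(⟨rfl,rfl,rfl⟩|(⟨rfl,rfl,rfl⟩|(⟨rfl,rfl,rfl⟩|(⟨rfl,rfl,rfl⟩|(⟨rfl,rfl,rfl⟩|(⟨rfl,rfl,rfl⟩|⟨rfl,rfl,rfl⟩))))))))))) <;> rintro ⟨s1, s2⟩ <;>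
    first | (revert s1; decide) | (revert s2; decide)

lemma pentsorted (p q r s t : ℤ) (h1 : p ≤ q) (h2 : q ≤ r) :
    |s - t| + (q - p) + (r - p) + (r - q) ≤
      |s - p| + |s - q| + |s - r| + |t - p| + |t - q| + |t - r| := by
  have A : r - p ≤ |s - p| + |s - r| := by
    rcases abs_cases (s - p) with ⟨h,_⟩|⟨h,_⟩ <;> rcases abs_cases (s - r) with ⟨h',_⟩|⟨h',_⟩ <;> omega
  have B : r - p ≤ |t - p| + |t - r| := by
    rcases abs_cases (t - p) with ⟨h,_⟩|⟨h,_⟩ <;> rcases abs_cases (t - r) with ⟨h',_⟩|⟨h',_⟩ <;> omega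
  have C : |s - t| ≤ |s - q| + |t - q| := by
    rcases abs_cases (s - q) with ⟨h,_⟩|⟨h,_⟩ <;> rcases abs_cases (t - q) with ⟨h',_⟩|⟨h',_⟩ <;>
      rcases abs_cases (s - t) with ⟨h'',_⟩|⟨h'',_⟩ <;> omega
  linarith

lemma pent1 (p q r s t : ℤ) :
    |s - t| + |p - q| + |p - r| + |q - r| ≤
      |s - p| + |s - q| + |s - r| + |t - p| + |t - q| + |t - r| := by
  rcases le_total p q with h|h <;> rcases le_total q r with h'|h' <;> rcases le_total p r with h''|h'' <;>
  [ have P := pentsorted p q r s t h h';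
    have P := pentsorted p q r s t h h';
    have P := pentsorted p r q s t h'' h';
    have P := pentsorted r p q s t h'' h;
    have P := pentsorted q p r s t h h'';
    have P := pentsorted q r p s t h' h'';
    have P := pentsorted r q p s t h' h;
    have P := pentsorted r q p s t h' h] <;>
  rcases abs_cases (p-q) with ⟨e1,_⟩|⟨e1,_⟩ <;> rcases abs_cases (p-r) with ⟨e2,_⟩|⟨e2,_⟩ <;>
    rcases abs_cases (q-r) with ⟨e3,_⟩|⟨e3,_⟩ <;> linarith

/-- The truncated tetrahedron graph is not 5-gonal, and consequently
admits no embedding with any scale `λ ≥ 1` into any `ℤ^n`. -/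
theorem truncatedTetrahedron_not_five_gonal_not_embeddable :
    (∃ a b c x y : {v : Fin 3 → ℤ // TrTetraVertex v},
      truncatedTetrahedronGraph.dist x a + truncatedTetrahedronGraph.dist x b +
          truncatedTetrahedronGraph.dist x c + truncatedTetrahedronGraph.dist y a +
          truncatedTetrahedronGraph.dist y b + truncatedTetrahedronGraph.dist y c <
        truncatedTetrahedronGraph.dist x y + truncatedTetrahedronGraph.dist a b +
          truncatedTetrahedronGraph.dist a c + truncatedTetrahedronGraph.dist b c) ∧
    ∀ (n lam : ℕ), 1 ≤ lam →
      ¬ ∃ f : {v : Fin 3 → ℤ // TrTetraVertex v} → Fin n → ℤ,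
          ∀ u v, (lam : ℤ) * (truncatedTetrahedronGraph.dist u v : ℤ) =
            ∑ i, |f u i - f v i| := by
  have uXA : truncatedTetrahedronGraph.dist vX vA ≤ 1 := by
    simpa using SimpleGraph.dist_le (SimpleGraph.Walk.cons eXA SimpleGraph.Walk.nil)
  have uXB : truncatedTetrahedronGraph.dist vX vB ≤ 2 := by
    simpa using SimpleGraph.dist_le (SimpleGraph.Walk.cons eXm1 (SimpleGraph.Walk.cons em1B SimpleGraph.Walk.nil))
  have uXC : truncatedTetrahedronGraph.dist vX vC ≤ 2 := by
    simpa using SimpleGraph.dist_le (SimpleGraph.Walk.cons eXm2 (SimpleGraph.Walk.cons em2C SimpleGraph.Walk.nil))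
  have uYA : truncatedTetrahedronGraph.dist vY vA ≤ 2 := by
    simpa using SimpleGraph.dist_le (SimpleGraph.Walk.cons eYm3 (SimpleGraph.Walk.cons em3A SimpleGraph.Walk.nil))
  have uYB : truncatedTetrahedronGraph.dist vY vB ≤ 1 := by
    simpa using SimpleGraph.dist_le (SimpleGraph.Walk.cons eYB SimpleGraph.Walk.nil)
  have uYC : truncatedTetrahedronGraph.dist vY vC ≤ 3 := by
    simpa using SimpleGraph.dist_le (SimpleGraph.Walk.cons eYm4 (SimpleGraph.Walk.cons em4m5 (SimpleGraph.Walk.cons em5C SimpleGraph.Walk.nil)))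
  have hrXB : truncatedTetrahedronGraph.Reachable vX vB := eXm1.reachable.trans em1B.reachable
  have hrXC : truncatedTetrahedronGraph.Reachable vX vC := eXm2.reachable.trans em2C.reachable
  have hrXY : truncatedTetrahedronGraph.Reachable vX vY := hrXB.trans eYB.reachable.symm
  have hrAB : truncatedTetrahedronGraph.Reachable vA vB := eXA.reachable.symm.trans hrXB
  have hrAC : truncatedTetrahedronGraph.Reachable vA vC := eXA.reachable.symm.trans hrXC
  have hrBC : truncatedTetrahedronGraph.Reachable vB vC := hrXB.symm.trans hrXC
  have lXY : 3 ≤ truncatedTetrahedronGraph.dist vX vY := by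
    refine three_le_dist _ _ hrXY (fun h => ?_) (fun h => ?_) hcomXY
    · exact absurd (congrArg Subtype.val h) (by decide)
    · rw [ttv_adj_iff] at h; revert h; rintro ⟨-, s⟩; revert s; decide
  have lAB : 3 ≤ truncatedTetrahedronGraph.dist vA vB := by
    refine three_le_dist _ _ hrAB (fun h => ?_) (fun h => ?_) hcomAB
    · exact absurd (congrArg Subtype.val h) (by decide)
    · rw [ttv_adj_iff] at h; revert h; rintro ⟨-, s⟩; revert s; decide
  have lAC : 3 ≤ truncatedTetrahedronGraph.dist vA vC := by
    refine three_le_dist _ _ hrAC (fun h => ?_) (fun h => ?_) hcomAC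
    · exact absurd (congrArg Subtype.val h) (by decide)
    · rw [ttv_adj_iff] at h; revert h; rintro ⟨-, s⟩; revert s; decide
  have lBC : 3 ≤ truncatedTetrahedronGraph.dist vB vC := by
    refine three_le_dist _ _ hrBC (fun h => ?_) (fun h => ?_) hcomBC
    · exact absurd (congrArg Subtype.val h) (by decide)
    · rw [ttv_adj_iff] at h; revert h; rintro ⟨-, s⟩; revert s; decide
  have key : (∃ a b c x y : {v : Fin 3 → ℤ // TrTetraVertex v},
      truncatedTetrahedronGraph.dist x a + truncatedTetrahedronGraph.dist x b +
          truncatedTetrahedronGraph.dist x c + truncatedTetrahedronGraph.dist y a +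
          truncatedTetrahedronGraph.dist y b + truncatedTetrahedronGraph.dist y c <
        truncatedTetrahedronGraph.dist x y + truncatedTetrahedronGraph.dist a b +
          truncatedTetrahedronGraph.dist a c + truncatedTetrahedronGraph.dist b c) :=
    ⟨vA, vB, vC, vX, vY, by omega⟩
  refine ⟨key, ?_⟩
  rintro n lam hlam ⟨f, hf⟩
  obtain ⟨a, b, c, x, y, hlt⟩ := key
  have pentsum :
      (lam : ℤ) * (truncatedTetrahedronGraph.dist x y : ℤ) +
        (lam : ℤ) * (truncatedTetrahedronGraph.dist a b : ℤ) +
        (lam : ℤ) * (truncatedTetrahedronGraph.dist a c : ℤ) +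
        (lam : ℤ) * (truncatedTetrahedronGraph.dist b c : ℤ) ≤
      (lam : ℤ) * (truncatedTetrahedronGraph.dist x a : ℤ) +
        (lam : ℤ) * (truncatedTetrahedronGraph.dist x b : ℤ) +
        (lam : ℤ) * (truncatedTetrahedronGraph.dist x c : ℤ) +
        (lam : ℤ) * (truncatedTetrahedronGraph.dist y a : ℤ) +
        (lam : ℤ) * (truncatedTetrahedronGraph.dist y b : ℤ) +
        (lam : ℤ) * (truncatedTetrahedronGraph.dist y c : ℤ) := by
    rw [hf x y, hf a b, hf a c, hf b c, hf x a, hf x b, hf x c, hf y a, hf y b, hf y c]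
    simp only [← Finset.sum_add_distrib]
    exact Finset.sum_le_sum fun i _ => pent1 (f a i) (f b i) (f c i) (f x i) (f y i)
  have hlam' : (1 : ℤ) ≤ (lam : ℤ) := by exact_mod_cast hlam
  have hlt' : ((truncatedTetrahedronGraph.dist x a : ℤ) + truncatedTetrahedronGraph.dist x b +
      truncatedTetrahedronGraph.dist x c + truncatedTetrahedronGraph.dist y a +
      truncatedTetrahedronGraph.dist y b + truncatedTetrahedronGraph.dist y c) + 1 ≤
      (truncatedTetrahedronGraph.dist x y : ℤ) + truncatedTetrahedronGraph.dist a b +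
      truncatedTetrahedronGraph.dist a c + truncatedTetrahedronGraph.dist b c := by
    exact_mod_cast hlt
  have hm := mul_le_mul_of_nonneg_left hlt' (by positivity : (0:ℤ) ≤ (lam : ℤ))
  nlinarith [pentsum, hm, hlam']
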